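/- arXiv:2303.13795 — 3 statements merged into one kernel-verified Lean document; each statement's English description precedes it below -/
import Mathlib

section
/- Under the setup, suppose D₁ ≥ D₀ almost surely, for all d, z ∈ {0,1} the pair (Z, W) is conditionally independent of Y_{d,z} given (D₁, D₀), Z is conditionally independent of (D₁, D₀) given W, P(Z = z, W = w) > 0 for z ∈ {0,1}, P(AT) > 0, P(CP) > 0, and the always-taker average direct effect satisfies E[Y_{1,1} − Y_{1,0} | AT] = ρ₁. Then r₁(w) := E[Y·D | Z = 1, W = w] − E[Y·D | Z = 0, W = w] = ρ₁·P(AT | W = w) + E[Y_{1,1} | CP]·P(CP | W = w). -/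
open MeasureTheory ProbabilityTheory

/-- `pr μ A` is the probability of the event `A`, as a real number. -/
noncomputable def pr {Ω : Type*} [MeasurableSpace Ω] (μ : Measure Ω) (A : Set Ω) : ℝ :=
  (μ A).toReal

/-- `prCond μ A B` is the conditional probability `P(A | B) = P(A ∩ B) / P(B)`. -/
noncomputable def prCond {Ω : Type*} [MeasurableSpace Ω] (μ : Measure Ω) (A B : Set Ω) : ℝ :=
  pr μ (A ∩ B) / pr μ B

/-- `cexp μ A f` is the conditional expectation `E[f | A]` of `f` given the event `A`. -/
noncomputable def cexp {Ω : Type*} [MeasurableSpace Ω] (μ : Measure Ω) (A : Set Ω)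
    (f : Ω → ℝ) : ℝ :=
  ∫ ω, f ω ∂(μ[|A])

/-- The event `{ω | f ω = c}`. -/
def evEq {Ω : Type*} (f : Ω → ℝ) (c : ℝ) : Set Ω := {ω | f ω = c}

/-- Always takers: `D₁ = D₀ = 1`. -/
def ATset {Ω : Type*} (D1 D0 : Ω → ℝ) : Set Ω := {ω | D1 ω = 1 ∧ D0 ω = 1}

/-- Never takers: `D₁ = D₀ = 0`. -/
def NTset {Ω : Type*} (D1 D0 : Ω → ℝ) : Set Ω := {ω | D1 ω = 0 ∧ D0 ω = 0}

/-- Compliers: `D₁ = 1`, `D₀ = 0`. -/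
def CPset {Ω : Type*} (D1 D0 : Ω → ℝ) : Set Ω := {ω | D1 ω = 1 ∧ D0 ω = 0}

section Aux

variable {Ω : Type*} [MeasurableSpace Ω] (μ : Measure Ω) [IsProbabilityMeasure μ]

lemma cexp_eq_setIntegral (A : Set Ω) (f : Ω → ℝ) :
    cexp μ A f = (μ A).toReal⁻¹ * ∫ x in A, f x ∂μ := by
  rw [cexp]
  unfold ProbabilityTheory.cond
  rw [integral_smul_measure, ENNReal.toReal_inv, smul_eq_mul]

lemma cexp_congr_on {A : Set Ω} (hA : MeasurableSet A) {f g : Ω → ℝ}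
    (h : ∀ ω ∈ A, f ω = g ω) : cexp μ A f = cexp μ A g := by
  rw [cexp_eq_setIntegral, cexp_eq_setIntegral, setIntegral_congr_fun hA h]

lemma cexp_add (A : Set Ω) {f g : Ω → ℝ} (hf : Integrable f μ) (hg : Integrable g μ) :
    cexp μ A (fun ω => f ω + g ω) = cexp μ A f + cexp μ A g := by
  rw [cexp_eq_setIntegral, cexp_eq_setIntegral, cexp_eq_setIntegral,
    integral_add hf.restrict hg.restrict, mul_add]

lemma cexp_sub (A : Set Ω) {f g : Ω → ℝ} (hf : Integrable f μ) (hg : Integrable g μ) :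
    cexp μ A (fun ω => f ω - g ω) = cexp μ A f - cexp μ A g := by
  rw [cexp_eq_setIntegral, cexp_eq_setIntegral, cexp_eq_setIntegral,
    integral_sub hf.restrict hg.restrict, mul_sub]

lemma cexp_of_ae_zero {A : Set Ω} {f : Ω → ℝ} (h : f =ᵐ[μ] 0) : cexp μ A f = 0 := by
  rw [cexp_eq_setIntegral, integral_eq_zero_of_ae (ae_restrict_of_ae h), mul_zero]

lemma integrable_cond_of {A : Set Ω} (hA : μ A ≠ 0) {f : Ω → ℝ} (hf : Integrable f μ) :
    Integrable f (μ[|A]) := by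
  unfold ProbabilityTheory.cond
  exact hf.restrict.smul_measure (ENNReal.inv_ne_top.mpr hA)

lemma key_cexp {Z W D1 D0 : Ω → ℝ} (hZm : Measurable Z) (hWm : Measurable W)
    (hD1m : Measurable D1) (hD0m : Measurable D0)
    {f : Ω → ℝ} (hf : Integrable f μ)
    (i j z w : ℝ) (hG : μ {ω | D1 ω = i ∧ D0 ω = j} ≠ 0)
    (hCI1 : IndepFun (fun ω => (Z ω, W ω)) f (μ[|{ω | D1 ω = i ∧ D0 ω = j}]))
    (hCI2 : IndepFun Z (fun ω => (D1 ω, D0 ω)) (μ[|evEq W w]))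
    (hS : μ (evEq Z z ∩ evEq W w) ≠ 0) :
    cexp μ (evEq Z z ∩ evEq W w) (Set.indicator {ω | D1 ω = i ∧ D0 ω = j} f)
      = cexp μ {ω | D1 ω = i ∧ D0 ω = j} f
          * prCond μ {ω | D1 ω = i ∧ D0 ω = j} (evEq W w) := by
  set G : Set Ω := {ω | D1 ω = i ∧ D0 ω = j} with hGdef
  set S : Set Ω := evEq Z z ∩ evEq W w with hSdef
  have hGm : MeasurableSet G :=
    (hD1m (measurableSet_singleton i)).inter (hD0m (measurableSet_singleton j))
  have hSwm : MeasurableSet (evEq W w) := hWm (measurableSet_singleton w)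
  have hSm : MeasurableSet S := (hZm (measurableSet_singleton z)).inter hSwm
  have hSw : μ (evEq W w) ≠ 0 := fun h0 => hS (measure_mono_null Set.inter_subset_right h0)
  -- Step A : ∫ over S ∩ G of f equals μ(S∩G).toReal * cexp μ G f
  have hSpre : S = (fun ω => (Z ω, W ω)) ⁻¹' {(z, w)} := by
    ext ω; simp [hSdef, evEq, Prod.ext_iff]
  have hind : IndepFun (S.indicator (fun _ => (1:ℝ))) f (μ[|G]) := by
    have h1 : S.indicator (fun _ => (1:ℝ))
        = (Set.indicator {((z : ℝ), (w : ℝ))} (fun _ => (1:ℝ))) ∘ (fun ω => (Z ω, W ω)) := by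
      funext ω
      by_cases hω : (Z ω, W ω) ∈ ({((z:ℝ),(w:ℝ))} : Set (ℝ × ℝ))
      · rw [Function.comp_apply, Set.indicator_of_mem hω,
          Set.indicator_of_mem (by rw [hSpre]; exact hω)]
      · rw [Function.comp_apply, Set.indicator_of_notMem hω,
          Set.indicator_of_notMem (by rw [hSpre]; exact hω)]
    rw [h1]
    exact hCI1.comp (measurable_const.indicator (measurableSet_singleton _)) measurable_id
  have hfG : Integrable f (μ[|G]) := integrable_cond_of μ hG hf
  have hindG : Integrable (S.indicator fun _ => (1:ℝ)) (μ[|G]) :=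
    integrable_cond_of μ hG ((integrable_const 1).indicator hSm)
  have hmul := hind.integral_mul_eq_mul_integral hindG.aestronglyMeasurable hfG.aestronglyMeasurable
  have hprod : (S.indicator (fun _ => (1:ℝ)) * f) = S.indicator f := by
    funext ω; by_cases h : ω ∈ S <;> simp [h]
  rw [hprod] at hmul
  -- rewrite both sides of hmul
  have hL : integral (μ[|G]) (S.indicator f)
      = (μ G).toReal⁻¹ * ∫ x in G, S.indicator f x ∂μ := cexp_eq_setIntegral μ G _
  have hInd1 : integral (μ[|G]) (S.indicator fun _ => (1:ℝ)) = ((μ[|G]) S).toReal := by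
    have := integral_indicator_one (μ := μ[|G]) hSm
    exact this
  rw [hL, hInd1, setIntegral_indicator hSm] at hmul
  have hcond : (μ[|G]) S = (μ G)⁻¹ * μ (G ∩ S) := cond_apply hGm μ S
  have ha : (μ G).toReal ≠ 0 := ENNReal.toReal_ne_zero.mpr ⟨hG, measure_ne_top μ G⟩
  have hA : ∫ x in G ∩ S, f x ∂μ = (μ (G ∩ S)).toReal * cexp μ G f := by
    have h2 : (μ G).toReal⁻¹ * ∫ x in G ∩ S, f x ∂μ
        = (μ G).toReal⁻¹ * ((μ (G ∩ S)).toReal * cexp μ G f) := by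
      rw [hmul, hcond, ENNReal.toReal_mul, ENNReal.toReal_inv, cexp]
      ring
    exact mul_left_cancel₀ (inv_ne_zero ha) h2
  -- Step B : μ (S ∩ G) via conditional independence
  have hGpre : (fun ω => (D1 ω, D0 ω)) ⁻¹' {(i, j)} = G := by
    ext ω; simp [hGdef, Prod.ext_iff]
  have hZpre : Z ⁻¹' {z} = evEq Z z := rfl
  have hindep2 := hCI2.measure_inter_preimage_eq_mul {z} {(i, j)}
    (measurableSet_singleton _) (measurableSet_singleton _)
  rw [hGpre, hZpre] at hindep2
  rw [cond_apply hSwm, cond_apply hSwm, cond_apply hSwm] at hindep2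
  have e1 : evEq W w ∩ (evEq Z z ∩ G) = S ∩ G := by
    rw [hSdef]; ext ω; simp only [Set.mem_inter_iff]; tauto
  have e2 : evEq W w ∩ evEq Z z = S := by
    rw [hSdef]; ext ω; simp only [Set.mem_inter_iff]; tauto
  rw [e1, e2] at hindep2
  have hreal := congrArg ENNReal.toReal hindep2
  simp only [ENNReal.toReal_mul, ENNReal.toReal_inv] at hreal
  set c := (μ (evEq W w)).toReal with hcdef
  have hc : c ≠ 0 := ENNReal.toReal_ne_zero.mpr ⟨hSw, measure_ne_top μ _⟩
  have hB : (μ (S ∩ G)).toReal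
      = (μ S).toReal * ((μ (evEq W w ∩ G)).toReal / c) := by
    have h3 : c⁻¹ * (μ (S ∩ G)).toReal
        = c⁻¹ * ((μ S).toReal * ((μ (evEq W w ∩ G)).toReal / c)) := by
      rw [hreal]; field_simp
    exact mul_left_cancel₀ (inv_ne_zero hc) h3
  -- conclusion
  have hs0 : (μ S).toReal ≠ 0 := ENNReal.toReal_ne_zero.mpr ⟨hS, measure_ne_top μ _⟩
  rw [cexp_eq_setIntegral μ S, setIntegral_indicator hGm, Set.inter_comm S G, hA,
    Set.inter_comm G S, hB, prCond, pr, pr, Set.inter_comm G (evEq W w)]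
  field_simp
  rw [← hcdef]
  field_simp
end Aux

/-- the contrast `r₁(w)` decomposes into direct and complier terms. -/
theorem r1_decomposition
    {Ω : Type*} [MeasurableSpace Ω] (μ : Measure Ω) [IsProbabilityMeasure μ]
    (Y : Fin 2 → Fin 2 → Ω → ℝ) (D1 D0 Z W : Ω → ℝ)
    (hYint : ∀ d z, Integrable (Y d z) μ) (hYmeas : ∀ d z, Measurable (Y d z))
    (hD1v : ∀ ω, D1 ω = 0 ∨ D1 ω = 1) (hD0v : ∀ ω, D0 ω = 0 ∨ D0 ω = 1)
    (hZv : ∀ ω, Z ω = 0 ∨ Z ω = 1) (hWv : ∀ ω, W ω = 0 ∨ W ω = 1)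
    (hD1m : Measurable D1) (hD0m : Measurable D0) (hZm : Measurable Z) (hWm : Measurable W)
    (D : Ω → ℝ) (hD : ∀ ω, D ω = D1 ω * Z ω + D0 ω * (1 - Z ω))
    (Yo : Ω → ℝ)
    (hYo : ∀ ω, Yo ω = (Y 1 1 ω * Z ω + Y 1 0 ω * (1 - Z ω)) * D ω
      + (Y 0 1 ω * Z ω + Y 0 0 ω * (1 - Z ω)) * (1 - D ω))
    (hmono : ∀ᵐ ω ∂μ, D0 ω ≤ D1 ω)
    (hCI1 : ∀ (d z : Fin 2) (i j : ℝ),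
      IndepFun (fun ω => (Z ω, W ω)) (Y d z) (μ[|{ω | D1 ω = i ∧ D0 ω = j}]))
    (hCI2 : ∀ w' : ℝ, IndepFun Z (fun ω => (D1 ω, D0 ω)) (μ[|evEq W w']))
    (w : ℝ) (hw : w = 0 ∨ w = 1)
    (hpos : ∀ z : ℝ, z = 0 ∨ z = 1 → 0 < pr μ (evEq Z z ∩ evEq W w))
    (hAT : 0 < pr μ (ATset D1 D0)) (hCP : 0 < pr μ (CPset D1 D0))
    (ρ1 : ℝ) (hρ1 : cexp μ (ATset D1 D0) (fun ω => Y 1 1 ω - Y 1 0 ω) = ρ1) :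
    cexp μ (evEq Z 1 ∩ evEq W w) (fun ω => Yo ω * D ω)
      - cexp μ (evEq Z 0 ∩ evEq W w) (fun ω => Yo ω * D ω)
      = ρ1 * prCond μ (ATset D1 D0) (evEq W w)
        + cexp μ (CPset D1 D0) (fun ω => Y 1 1 ω) * prCond μ (CPset D1 D0) (evEq W w) := by
  simp only [ATset, CPset] at hAT hCP hρ1 ⊢
  have hS1 : μ (evEq Z 1 ∩ evEq W w) ≠ 0 := by
    have h := hpos 1 (Or.inr rfl)
    intro h0; rw [pr, h0] at h; simp at h
  have hS0 : μ (evEq Z 0 ∩ evEq W w) ≠ 0 := by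
    have h := hpos 0 (Or.inl rfl)
    intro h0; rw [pr, h0] at h; simp at h
  have hATne : μ {ω | D1 ω = 1 ∧ D0 ω = 1} ≠ 0 := by
    intro h0; rw [pr, h0] at hAT; simp at hAT
  have hCPne : μ {ω | D1 ω = 1 ∧ D0 ω = (0:ℝ)} ≠ 0 := by
    intro h0; rw [pr, h0] at hCP; simp at hCP
  have hATm : MeasurableSet {ω | D1 ω = 1 ∧ D0 ω = (1:ℝ)} :=
    (hD1m (measurableSet_singleton 1)).inter (hD0m (measurableSet_singleton 1))
  have hCPm : MeasurableSet {ω | D1 ω = 1 ∧ D0 ω = (0:ℝ)} :=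
    (hD1m (measurableSet_singleton 1)).inter (hD0m (measurableSet_singleton 0))
  have hDFm : MeasurableSet {ω | D1 ω = 0 ∧ D0 ω = (1:ℝ)} :=
    (hD1m (measurableSet_singleton 0)).inter (hD0m (measurableSet_singleton 1))
  have hS1m : MeasurableSet (evEq Z 1 ∩ evEq W w) :=
    (hZm (measurableSet_singleton 1)).inter (hWm (measurableSet_singleton w))
  have hS0m : MeasurableSet (evEq Z 0 ∩ evEq W w) :=
    (hZm (measurableSet_singleton 0)).inter (hWm (measurableSet_singleton w))
  -- Z = 1 side
  have h1 : cexp μ (evEq Z 1 ∩ evEq W w) (fun ω => Yo ω * D ω)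
      = cexp μ {ω | D1 ω = 1 ∧ D0 ω = 1} (Y 1 1)
          * prCond μ {ω | D1 ω = 1 ∧ D0 ω = 1} (evEq W w)
        + cexp μ {ω | D1 ω = 1 ∧ D0 ω = 0} (Y 1 1)
          * prCond μ {ω | D1 ω = 1 ∧ D0 ω = 0} (evEq W w) := by
    have hpt : ∀ ω ∈ evEq Z 1 ∩ evEq W w,
        Yo ω * D ω = Set.indicator {ω | D1 ω = 1 ∧ D0 ω = (1:ℝ)} (Y 1 1) ω
          + Set.indicator {ω | D1 ω = 1 ∧ D0 ω = (0:ℝ)} (Y 1 1) ω := by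
      rintro ω ⟨hz, -⟩
      have hz1 : Z ω = 1 := hz
      rcases hD1v ω with hd1 | hd1 <;> rcases hD0v ω with hd0 | hd0 <;>
        simp [Set.indicator_apply, hYo ω, hD ω, hz1, hd1, hd0]
    rw [cexp_congr_on μ hS1m hpt,
      cexp_add μ _ ((hYint 1 1).indicator hATm) ((hYint 1 1).indicator hCPm),
      key_cexp μ hZm hWm hD1m hD0m (hYint 1 1) 1 1 1 w hATne (hCI1 1 1 1 1) (hCI2 w) hS1,
      key_cexp μ hZm hWm hD1m hD0m (hYint 1 1) 1 0 1 w hCPne (hCI1 1 1 1 0) (hCI2 w) hS1]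
  -- Z = 0 side
  have h0 : cexp μ (evEq Z 0 ∩ evEq W w) (fun ω => Yo ω * D ω)
      = cexp μ {ω | D1 ω = 1 ∧ D0 ω = 1} (Y 1 0)
          * prCond μ {ω | D1 ω = 1 ∧ D0 ω = 1} (evEq W w) := by
    have hpt : ∀ ω ∈ evEq Z 0 ∩ evEq W w,
        Yo ω * D ω = Set.indicator {ω | D1 ω = 1 ∧ D0 ω = (1:ℝ)} (Y 1 0) ω
          + Set.indicator {ω | D1 ω = 0 ∧ D0 ω = (1:ℝ)} (Y 1 0) ω := by
      rintro ω ⟨hz, -⟩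
      have hz0 : Z ω = 0 := hz
      rcases hD1v ω with hd1 | hd1 <;> rcases hD0v ω with hd0 | hd0 <;>
        simp [Set.indicator_apply, hYo ω, hD ω, hz0, hd1, hd0]
    have hDF0 : Set.indicator {ω | D1 ω = 0 ∧ D0 ω = (1:ℝ)} (Y 1 0) =ᵐ[μ] 0 := by
      filter_upwards [hmono] with ω hω
      have hnm : ω ∉ {ω | D1 ω = 0 ∧ D0 ω = (1:ℝ)} := by
        rintro ⟨ha, hb⟩; rw [ha, hb] at hω; linarith
      simp [Set.indicator_of_notMem hnm]
    rw [cexp_congr_on μ hS0m hpt,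
      cexp_add μ _ ((hYint 1 0).indicator hATm) ((hYint 1 0).indicator hDFm),
      key_cexp μ hZm hWm hD1m hD0m (hYint 1 0) 1 1 0 w hATne (hCI1 1 0 1 1) (hCI2 w) hS0,
      cexp_of_ae_zero μ hDF0, add_zero]
  rw [h1, h0]
  rw [cexp_sub μ {ω | D1 ω = 1 ∧ D0 ω = 1} (hYint 1 1) (hYint 1 0)] at hρ1
  rw [← hρ1]
  ring
end

section
/- Under the setup, suppose D₁ ≥ D₀ almost surely, for all d, z ∈ {0,1} the pair (Z, W) is conditionally independent of Y_{d,z} given (D₁, D₀), Z is conditionally independent of (D₁, D₀) given W, P(Z = z, W = w) > 0 for all z, w ∈ {0,1}, P(NT) > 0, P(CP) > 0, E[Y_{0,1} − Y_{0,0} | NT] = ρ₀, and the relevance condition P(NT | W = 1)·P(CP | W = 0) ≠ P(NT | W = 0)·P(CP | W = 1) holds. Then ρ₀ = (r₀(1)·P(CP | W = 0) − r₀(0)·P(CP | W = 1)) / (P(NT | W = 1)·P(CP | W = 0) − P(NT | W = 0)·P(CP | W = 1)), where r₀(w) = E[Y·(1−D) | Z = 1, W = w] − E[Y·(1−D) |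 Z = 0, W = w]. -/
open MeasureTheory ProbabilityTheory

section Helpers
variable {Ω : Type*} [MeasurableSpace Ω]


lemma cexp_eq' (μ : Measure Ω) (A : Set Ω) (f : Ω → ℝ) :
    cexp μ A f = (pr μ A)⁻¹ * ∫ ω in A, f ω ∂μ := by
  rw [cexp, pr, ProbabilityTheory.cond, integral_smul_measure, ENNReal.toReal_inv, smul_eq_mul]

lemma setIntegral_indep' (μ : Measure Ω) [IsProbabilityMeasure μ]
    {G : Set Ω} (hG : MeasurableSet G) (hGpos : μ G ≠ 0)
    {β : Type*} [MeasurableSpace β] {X : Ω → β} (hX : Measurable X)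
    {p : Set β} (hp : MeasurableSet p)
    {f : Ω → ℝ} (hf : Measurable f)
    (hind : IndepFun X f (μ[|G])) :
    ∫ ω in G ∩ X ⁻¹' p, f ω ∂μ = pr μ (G ∩ X ⁻¹' p) * cexp μ G f := by
  set ν := μ[|G] with hν
  set S := X ⁻¹' p with hSdef
  have hS : MeasurableSet S := hX hp
  have h1 : IndepFun (fun ω => Set.indicator p (fun _ => (1:ℝ)) (X ω)) f ν :=
    hind.comp (measurable_const.indicator hp) measurable_id
  have h2 : (∫ ω, (Set.indicator p (fun _ => (1:ℝ)) (X ω)) * f ω ∂ν)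
      = (∫ ω, Set.indicator p (fun _ => (1:ℝ)) (X ω) ∂ν) * ∫ ω, f ω ∂ν :=
    h1.integral_fun_mul_eq_mul_integral ((measurable_const.indicator hp).comp hX).aestronglyMeasurable
      hf.aestronglyMeasurable
  have hee : ∀ ω, (Set.indicator p (fun _ => (1:ℝ)) (X ω)) * f ω = S.indicator f ω := by
    intro ω
    by_cases h : ω ∈ S
    · simp [Set.indicator_of_mem, h, hSdef, Set.mem_preimage.mp h]
    · have : X ω ∉ p := h
      simp [Set.indicator_of_notMem, h, this]
  have hone : ∀ ω, (Set.indicator p (fun _ => (1:ℝ)) (X ω)) = S.indicator (fun _ => (1:ℝ)) ω := by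
    intro ω; by_cases h : ω ∈ S
    · simp [Set.indicator_of_mem, h, Set.mem_preimage.mp h]
    · have : X ω ∉ p := h
      simp [Set.indicator_of_notMem, h, this]
  have h2' : ∫ ω in S, f ω ∂ν = (ν S).toReal * ∫ ω, f ω ∂ν := by
    calc ∫ ω in S, f ω ∂ν = ∫ ω, S.indicator f ω ∂ν := (integral_indicator hS).symm
      _ = ∫ ω, (Set.indicator p (fun _ => (1:ℝ)) (X ω)) * f ω ∂ν :=
          integral_congr_ae (Filter.Eventually.of_forall fun ω => (hee ω).symm)
      _ = (∫ ω, Set.indicator p (fun _ => (1:ℝ)) (X ω) ∂ν) * ∫ ω, f ω ∂ν := h2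
      _ = (∫ ω, S.indicator (fun _ => (1:ℝ)) ω ∂ν) * ∫ ω, f ω ∂ν := by
          rw [integral_congr_ae (Filter.Eventually.of_forall hone)]
      _ = (ν S).toReal * ∫ ω, f ω ∂ν := by
          rw [integral_indicator hS]; simp [Measure.real]
  clear h2
  rename' h2' => h2
  have hrestr : ∫ ω in S, f ω ∂ν = ((μ G).toReal)⁻¹ * ∫ ω in S ∩ G, f ω ∂μ := by
    rw [hν, ProbabilityTheory.cond, Measure.restrict_smul,
      Measure.restrict_restrict hS, integral_smul_measure, ENNReal.toReal_inv, smul_eq_mul]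
  have hcond : (ν S).toReal = ((μ G).toReal)⁻¹ * (μ (G ∩ S)).toReal := by
    rw [hν, cond_apply hG, ENNReal.toReal_mul, ENNReal.toReal_inv]
  rw [hrestr, hcond] at h2
  have hGfin : (μ G) ≠ ⊤ := measure_ne_top μ G
  have hGt : (μ G).toReal ≠ 0 := by
    simp [ENNReal.toReal_eq_zero_iff, hGpos, hGfin]
  have : ∫ ω in S ∩ G, f ω ∂μ = (μ (G ∩ S)).toReal * ∫ ω, f ω ∂ν := by
    field_simp at h2
    linarith [h2]
  rw [pr, cexp, ← hν]
  rw [Set.inter_comm G S] at this ⊢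
  rw [this, Set.inter_comm S G]

lemma fact2' (μ : Measure Ω) [IsProbabilityMeasure μ]
    {Wset : Set Ω} (hW : MeasurableSet Wset) (hWpos : μ Wset ≠ 0)
    {β γ : Type*} [MeasurableSpace β] [MeasurableSpace γ]
    {X : Ω → β} {Y : Ω → γ}
    {s : Set β} (hs : MeasurableSet s) {t : Set γ} (ht : MeasurableSet t)
    (hind : IndepFun X Y (μ[|Wset])) :
    pr μ (X ⁻¹' s ∩ Y ⁻¹' t ∩ Wset) * pr μ Wset
      = pr μ (X ⁻¹' s ∩ Wset) * pr μ (Y ⁻¹' t ∩ Wset) := by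
  have h := hind.measure_inter_preimage_eq_mul s t hs ht
  rw [cond_apply hW, cond_apply hW, cond_apply hW] at h
  have h' := congrArg ENNReal.toReal h
  have hWfin : μ Wset ≠ ⊤ := measure_ne_top μ Wset
  have hWt : (μ Wset).toReal ≠ 0 := by
    simp [ENNReal.toReal_eq_zero_iff, hWpos, hWfin]
  rw [ENNReal.toReal_mul, ENNReal.toReal_mul, ENNReal.toReal_mul, ENNReal.toReal_mul,
    ENNReal.toReal_inv] at h'
  simp only [pr]
  rw [Set.inter_comm _ Wset, Set.inter_comm _ Wset, Set.inter_comm _ Wset]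
  field_simp at h'
  exact mul_right_cancel₀ hWt (by linear_combination (μ Wset).toReal * h')

end Helpers

/-- identification of the direct effect `ρ₀` on the untreated outcome. -/
theorem rho0_identified
    {Ω : Type*} [MeasurableSpace Ω] (μ : Measure Ω) [IsProbabilityMeasure μ]
    (Y : Fin 2 → Fin 2 → Ω → ℝ) (D1 D0 Z W : Ω → ℝ)
    (hYint : ∀ d z, Integrable (Y d z) μ) (hYmeas : ∀ d z, Measurable (Y d z))
    (hD1v : ∀ ω, D1 ω = 0 ∨ D1 ω = 1) (hD0v : ∀ ω, D0 ω = 0 ∨ D0 ω = 1)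
    (hZv : ∀ ω, Z ω = 0 ∨ Z ω = 1) (hWv : ∀ ω, W ω = 0 ∨ W ω = 1)
    (hD1m : Measurable D1) (hD0m : Measurable D0) (hZm : Measurable Z) (hWm : Measurable W)
    (D : Ω → ℝ) (hD : ∀ ω, D ω = D1 ω * Z ω + D0 ω * (1 - Z ω))
    (Yo : Ω → ℝ)
    (hYo : ∀ ω, Yo ω = (Y 1 1 ω * Z ω + Y 1 0 ω * (1 - Z ω)) * D ω
      + (Y 0 1 ω * Z ω + Y 0 0 ω * (1 - Z ω)) * (1 - D ω))
    (hmono : ∀ᵐ ω ∂μ, D0 ω ≤ D1 ω)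
    (hCI1 : ∀ (d z : Fin 2) (i j : ℝ),
      IndepFun (fun ω => (Z ω, W ω)) (Y d z) (μ[|{ω | D1 ω = i ∧ D0 ω = j}]))
    (hCI2 : ∀ w' : ℝ, IndepFun Z (fun ω => (D1 ω, D0 ω)) (μ[|evEq W w']))
    (hpos : ∀ z w : ℝ, z = 0 ∨ z = 1 → w = 0 ∨ w = 1 → 0 < pr μ (evEq Z z ∩ evEq W w))
    (hNT : 0 < pr μ (NTset D1 D0)) (hCP : 0 < pr μ (CPset D1 D0))
    (ρ0 : ℝ) (hρ0 : cexp μ (NTset D1 D0) (fun ω => Y 0 1 ω - Y 0 0 ω) = ρ0)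
    (r01 r00 : ℝ)
    (hr01 : r01 = cexp μ (evEq Z 1 ∩ evEq W 1) (fun ω => Yo ω * (1 - D ω))
      - cexp μ (evEq Z 0 ∩ evEq W 1) (fun ω => Yo ω * (1 - D ω)))
    (hr00 : r00 = cexp μ (evEq Z 1 ∩ evEq W 0) (fun ω => Yo ω * (1 - D ω))
      - cexp μ (evEq Z 0 ∩ evEq W 0) (fun ω => Yo ω * (1 - D ω)))
    (hrel : prCond μ (NTset D1 D0) (evEq W 1) * prCond μ (CPset D1 D0) (evEq W 0)
      ≠ prCond μ (NTset D1 D0) (evEq W 0) * prCond μ (CPset D1 D0) (evEq W 1)) :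
    ρ0 = (r01 * prCond μ (CPset D1 D0) (evEq W 0) - r00 * prCond μ (CPset D1 D0) (evEq W 1))
      / (prCond μ (NTset D1 D0) (evEq W 1) * prCond μ (CPset D1 D0) (evEq W 0)
        - prCond μ (NTset D1 D0) (evEq W 0) * prCond μ (CPset D1 D0) (evEq W 1)) := by
  classical
  set NT := NTset D1 D0 with hNTdef
  set CP := CPset D1 D0 with hCPdef
  set ZW : Ω → ℝ × ℝ := fun ω => (Z ω, W ω) with hZWdef
  have hZWm : Measurable ZW := hZm.prodMk hWm
  have hNTm : MeasurableSet NT := by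
    have h : NT = D1 ⁻¹' {0} ∩ D0 ⁻¹' {0} := rfl
    rw [h]; exact (hD1m (measurableSet_singleton _)).inter (hD0m (measurableSet_singleton _))
  have hCPm : MeasurableSet CP := by
    have h : CP = D1 ⁻¹' {1} ∩ D0 ⁻¹' {0} := rfl
    rw [h]; exact (hD1m (measurableSet_singleton _)).inter (hD0m (measurableSet_singleton _))
  have hevZ : ∀ z : ℝ, evEq Z z = Z ⁻¹' {z} := fun z => rfl
  have hWmeas : ∀ w : ℝ, MeasurableSet (evEq W w) := fun w => hWm (measurableSet_singleton _)
  have hZmeas : ∀ z : ℝ, MeasurableSet (evEq Z z) := fun z => hZm (measurableSet_singleton _)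
  have hZWset : ∀ z w : ℝ, evEq Z z ∩ evEq W w = ZW ⁻¹' {(z, w)} := by
    intro z w; ext ω
    simp only [hZWdef, Set.mem_inter_iff, Set.mem_preimage, Set.mem_singleton_iff,
      Prod.ext_iff, evEq, Set.mem_setOf_eq]
  have hNTpos : μ NT ≠ 0 := by
    intro h; rw [pr, h] at hNT; simp at hNT
  have hCPpos : μ CP ≠ 0 := by
    intro h; rw [pr, h] at hCP; simp at hCP
  have hprW : ∀ w : ℝ, w = 0 ∨ w = 1 → 0 < pr μ (evEq W w) := by
    intro w hw
    refine lt_of_lt_of_le (hpos 1 w (Or.inr rfl) hw) ?_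
    exact ENNReal.toReal_mono (measure_ne_top μ _) (measure_mono Set.inter_subset_right)
  have hμW : ∀ w : ℝ, w = 0 ∨ w = 1 → μ (evEq W w) ≠ 0 := by
    intro w hw h; have h2 := hprW w hw; rw [pr, h] at h2; simp at h2
  have hindNT : ∀ d z : Fin 2, IndepFun ZW (Y d z) (μ[|NT]) := fun d z => hCI1 d z 0 0
  have hindCP : ∀ d z : Fin 2, IndepFun ZW (Y d z) (μ[|CP]) := fun d z => hCI1 d z 1 0
  have hpairpre : ∀ i j : ℝ,
      (fun ω => (D1 ω, D0 ω)) ⁻¹' {(i, j)} = {ω | D1 ω = i ∧ D0 ω = j} := by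
    intro i j; ext ω
    simp only [Set.mem_preimage, Set.mem_singleton_iff, Prod.ext_iff, Set.mem_setOf_eq]
  have hfact : ∀ (z w : ℝ), w = 0 ∨ w = 1 → ∀ (G : Set Ω), (G = NT ∨ G = CP) →
      pr μ (G ∩ (evEq Z z ∩ evEq W w)) * pr μ (evEq W w)
        = pr μ (evEq Z z ∩ evEq W w) * pr μ (G ∩ evEq W w) := by
    intro z w hw G hG
    obtain ⟨i, j, hij⟩ : ∃ i j : ℝ, G = {ω | D1 ω = i ∧ D0 ω = j} := by
      rcases hG with h | h
      · exact ⟨0, 0, h⟩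
      · exact ⟨1, 0, h⟩
    have h := fact2' μ (hWmeas w) (hμW w hw) (measurableSet_singleton (z : ℝ))
      (measurableSet_singleton ((i, j) : ℝ × ℝ)) (hCI2 w)
    rw [hpairpre, ← hevZ, ← hij] at h
    have hs : G ∩ (evEq Z z ∩ evEq W w) = evEq Z z ∩ G ∩ evEq W w := by
      rw [← Set.inter_assoc, Set.inter_comm G (evEq Z z)]
    rw [hs]; exact h
  have hIntCond : ∀ (A : Set Ω), μ A ≠ 0 → ∀ d z : Fin 2, Integrable (Y d z) (μ[|A]) := by
    intro A hA d z
    rw [ProbabilityTheory.cond]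
    exact ((hYint d z).restrict).smul_measure (ENNReal.inv_ne_top.mpr hA)
  -- z = 1 identity
  have hstep1 : ∀ w : ℝ, w = 0 ∨ w = 1 →
      cexp μ (evEq Z 1 ∩ evEq W w) (fun ω => Yo ω * (1 - D ω))
        = prCond μ NT (evEq W w) * cexp μ NT (Y 0 1) := by
    intro w hw
    set S := evEq Z 1 ∩ evEq W w with hSdef
    have hSm : MeasurableSet S := (hZmeas 1).inter (hWmeas w)
    have hSpr : 0 < pr μ S := hpos 1 w (Or.inr rfl) hw
    have hae : ∀ᵐ ω ∂μ, S.indicator (fun ω => Yo ω * (1 - D ω)) ω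
        = (NT ∩ S).indicator (Y 0 1) ω := by
      filter_upwards [hmono] with ω hm
      by_cases hωS : ω ∈ S
      · have hZ1 : Z ω = 1 := hωS.1
        rcases hD1v ω with h1 | h1
        · have h0 : D0 ω = 0 := by
            rcases hD0v ω with h | h
            · exact h
            · exfalso; rw [h, h1] at hm; linarith
          have hNTmem : ω ∈ NT := ⟨h1, h0⟩
          have hDo : D ω = 0 := by rw [hD ω, hZ1, h1, h0]; ring
          rw [Set.indicator_of_mem hωS, Set.indicator_of_mem (Set.mem_inter hNTmem hωS),
            hYo ω, hDo, hZ1]; ring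
        · have hDo : D ω = 1 := by rw [hD ω, hZ1, h1]; ring
          have hnot : ω ∉ NT ∩ S := by
            intro hc; have h2 : D1 ω = 0 := hc.1.1; rw [h2] at h1; norm_num at h1
          rw [Set.indicator_of_mem hωS, Set.indicator_of_notMem hnot, hDo]; ring
      · have hnot : ω ∉ NT ∩ S := fun hc => hωS hc.2
        rw [Set.indicator_of_notMem hωS, Set.indicator_of_notMem hnot]
    have hint : ∫ ω in S, Yo ω * (1 - D ω) ∂μ = ∫ ω in NT ∩ S, Y 0 1 ω ∂μ := by
      rw [← integral_indicator hSm, ← integral_indicator (hNTm.inter hSm)]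
      exact integral_congr_ae hae
    have hkey : ∫ ω in NT ∩ S, Y 0 1 ω ∂μ = pr μ (NT ∩ S) * cexp μ NT (Y 0 1) := by
      have h := setIntegral_indep' μ hNTm hNTpos hZWm
        (measurableSet_singleton ((1, w) : ℝ × ℝ)) (hYmeas 0 1) (hindNT 0 1)
      rw [← hZWset 1 w] at h
      exact h
    have hfr : (pr μ S)⁻¹ * pr μ (NT ∩ S) = prCond μ NT (evEq W w) := by
      have hf := hfact 1 w hw NT (Or.inl rfl)
      rw [prCond]
      have h1 : pr μ (evEq W w) ≠ 0 := ne_of_gt (hprW w hw)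
      have h2 : pr μ S ≠ 0 := ne_of_gt hSpr
      rw [← hSdef] at hf
      field_simp
      linear_combination hf
    rw [cexp_eq']
    have hb : (∫ ω in S, (fun ω => Yo ω * (1 - D ω)) ω ∂μ) = ∫ ω in S, Yo ω * (1 - D ω) ∂μ := rfl
    rw [hb, hint, hkey, ← mul_assoc, hfr]
  -- z = 0 identity
  have hstep0 : ∀ w : ℝ, w = 0 ∨ w = 1 →
      cexp μ (evEq Z 0 ∩ evEq W w) (fun ω => Yo ω * (1 - D ω))
        = prCond μ NT (evEq W w) * cexp μ NT (Y 0 0)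
          + prCond μ CP (evEq W w) * cexp μ CP (Y 0 0) := by
    intro w hw
    set S := evEq Z 0 ∩ evEq W w with hSdef
    have hSm : MeasurableSet S := (hZmeas 0).inter (hWmeas w)
    have hSpr : 0 < pr μ S := hpos 0 w (Or.inl rfl) hw
    have hptw : ∀ ω, S.indicator (fun ω => Yo ω * (1 - D ω)) ω
        = (NT ∩ S).indicator (Y 0 0) ω + (CP ∩ S).indicator (Y 0 0) ω := by
      intro ω
      by_cases hωS : ω ∈ S
      · have hZ0 : Z ω = 0 := hωS.1
        rcases hD0v ω with h0 | h0
        · have hDo : D ω = 0 := by rw [hD ω, hZ0, h0]; ring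
          rcases hD1v ω with h1 | h1
          · have hmem : ω ∈ NT := ⟨h1, h0⟩
            have hnot : ω ∉ CP ∩ S := by
              intro hc; have h2 : D1 ω = 1 := hc.1.1; rw [h1] at h2; norm_num at h2
            rw [Set.indicator_of_mem hωS, Set.indicator_of_mem (Set.mem_inter hmem hωS),
              Set.indicator_of_notMem hnot, hYo ω, hDo, hZ0]; ring
          · have hmem : ω ∈ CP := ⟨h1, h0⟩
            have hnot : ω ∉ NT ∩ S := by
              intro hc; have h2 : D1 ω = 0 := hc.1.1; rw [h1] at h2; norm_num at h2
            rw [Set.indicator_of_mem hωS, Set.indicator_of_notMem hnot,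
              Set.indicator_of_mem (Set.mem_inter hmem hωS), hYo ω, hDo, hZ0]; ring
        · have hDo : D ω = 1 := by rw [hD ω, hZ0, h0]; ring
          have hn1 : ω ∉ NT ∩ S := by
            intro hc; have h2 : D0 ω = 0 := hc.1.2; rw [h0] at h2; norm_num at h2
          have hn2 : ω ∉ CP ∩ S := by
            intro hc; have h2 : D0 ω = 0 := hc.1.2; rw [h0] at h2; norm_num at h2
          rw [Set.indicator_of_mem hωS, Set.indicator_of_notMem hn1,
            Set.indicator_of_notMem hn2, hDo]; ring
      · have hn1 : ω ∉ NT ∩ S := fun hc => hωS hc.2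
        have hn2 : ω ∉ CP ∩ S := fun hc => hωS hc.2
        rw [Set.indicator_of_notMem hωS, Set.indicator_of_notMem hn1,
          Set.indicator_of_notMem hn2]; ring
    have hint : ∫ ω in S, Yo ω * (1 - D ω) ∂μ
        = (∫ ω in NT ∩ S, Y 0 0 ω ∂μ) + ∫ ω in CP ∩ S, Y 0 0 ω ∂μ := by
      rw [← integral_indicator hSm, ← integral_indicator (hNTm.inter hSm),
        ← integral_indicator (hCPm.inter hSm),
        ← integral_add ((hYint 0 0).indicator (hNTm.inter hSm))
          ((hYint 0 0).indicator (hCPm.inter hSm))]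
      exact integral_congr_ae (Filter.Eventually.of_forall hptw)
    have hkeyNT : ∫ ω in NT ∩ S, Y 0 0 ω ∂μ = pr μ (NT ∩ S) * cexp μ NT (Y 0 0) := by
      have h := setIntegral_indep' μ hNTm hNTpos hZWm
        (measurableSet_singleton ((0, w) : ℝ × ℝ)) (hYmeas 0 0) (hindNT 0 0)
      rw [← hZWset 0 w] at h
      exact h
    have hkeyCP : ∫ ω in CP ∩ S, Y 0 0 ω ∂μ = pr μ (CP ∩ S) * cexp μ CP (Y 0 0) := by
      have h := setIntegral_indep' μ hCPm hCPpos hZWm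
        (measurableSet_singleton ((0, w) : ℝ × ℝ)) (hYmeas 0 0) (hindCP 0 0)
      rw [← hZWset 0 w] at h
      exact h
    have h1 : pr μ (evEq W w) ≠ 0 := ne_of_gt (hprW w hw)
    have h2 : pr μ S ≠ 0 := ne_of_gt hSpr
    have hfrNT : (pr μ S)⁻¹ * pr μ (NT ∩ S) = prCond μ NT (evEq W w) := by
      have hf := hfact 0 w hw NT (Or.inl rfl)
      rw [← hSdef] at hf
      rw [prCond]; field_simp; linear_combination hf
    have hfrCP : (pr μ S)⁻¹ * pr μ (CP ∩ S) = prCond μ CP (evEq W w) := by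
      have hf := hfact 0 w hw CP (Or.inr rfl)
      rw [← hSdef] at hf
      rw [prCond]; field_simp; linear_combination hf
    rw [cexp_eq']
    have hb : (∫ ω in S, (fun ω => Yo ω * (1 - D ω)) ω ∂μ) = ∫ ω in S, Yo ω * (1 - D ω) ∂μ := rfl
    rw [hb, hint, hkeyNT, hkeyCP, mul_add, ← mul_assoc, ← mul_assoc, hfrNT, hfrCP]
  -- assemble
  have hρ : ρ0 = cexp μ NT (Y 0 1) - cexp μ NT (Y 0 0) := by
    rw [← hρ0]
    exact integral_sub (hIntCond NT hNTpos 0 1) (hIntCond NT hNTpos 0 0)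
  have hΔ : prCond μ NT (evEq W 1) * prCond μ CP (evEq W 0)
      - prCond μ NT (evEq W 0) * prCond μ CP (evEq W 1) ≠ 0 := sub_ne_zero_of_ne hrel
  rw [hr01, hr00, hstep1 1 (Or.inr rfl), hstep1 0 (Or.inl rfl),
    hstep0 1 (Or.inr rfl), hstep0 0 (Or.inl rfl), eq_div_iff hΔ, hρ]
  ring
end

section
/- Under the setup, suppose D₁ ≥ D₀ almost surely, for all d, z ∈ {0,1} the pair (Z, W) is conditionally independent of Y_{d,z} given (D₁, D₀), Z is conditionally independent of (D₁, D₀) given W, P(Z = z, W = 1) > 0 for z ∈ {0,1}, P(NT) > 0, P(CP) > 0, P(CP | W = 1) > 0, and E[Y_{0,1} − Y_{0,0} | NT] = ρ₀. Then E[Y_{0,0} | CP] = −(r₀(1) − ρ₀·P(NT | W = 1)) / P(CP | W = 1), where r₀(1) = E[Y·(1−D) | Z = 1, W = 1] − E[Y·(1−D) | Z = 0, W = 1]. -/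
open MeasureTheory ProbabilityTheory

section Aux
variable {Ω : Type*} [MeasurableSpace Ω] {μ : Measure Ω}

lemma cexp_eq_smul (μ : Measure Ω) (A : Set Ω) (f : Ω → ℝ) :
    cexp μ A f = (μ A).toReal⁻¹ * ∫ ω in A, f ω ∂μ := by
  rw [cexp, ProbabilityTheory.cond, integral_smul_measure, ENNReal.toReal_inv, smul_eq_mul]

lemma integrable_cond [IsFiniteMeasure μ] {A : Set Ω} (hA : μ A ≠ 0) {f : Ω → ℝ}
    (hf : Integrable f μ) : Integrable f (μ[|A]) := by
  rw [ProbabilityTheory.cond]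
  exact (hf.restrict).smul_measure (by simp [hA])

lemma cexp_congr_ae (μ : Measure Ω) {A : Set Ω} (hA : MeasurableSet A) {f g : Ω → ℝ}
    (h : ∀ᵐ ω ∂μ, ω ∈ A → f ω = g ω) : cexp μ A f = cexp μ A g := by
  rw [cexp_eq_smul, cexp_eq_smul]
  congr 1
  exact setIntegral_congr_ae hA h

lemma integral_indicator_of_indepFun (ν : Measure Ω) [IsProbabilityMeasure ν]
    {X : Ω → ℝ × ℝ} {f : Ω → ℝ} (hX : Measurable X)
    (hfm : AEStronglyMeasurable f ν)
    (hind : IndepFun X f ν) {T : Set (ℝ × ℝ)} (hT : MeasurableSet T) :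
    ∫ ω, (X ⁻¹' T).indicator f ω ∂ν = (ν (X ⁻¹' T)).toReal * ∫ ω, f ω ∂ν := by
  have hφ : Measurable (T.indicator (1 : ℝ × ℝ → ℝ)) := measurable_one.indicator hT
  have h2 : IndepFun (fun ω => T.indicator 1 (X ω)) f ν := hind.comp hφ measurable_id
  have h3 : ∫ ω, T.indicator (1 : ℝ × ℝ → ℝ) (X ω) * f ω ∂ν
      = (∫ ω, T.indicator (1 : ℝ × ℝ → ℝ) (X ω) ∂ν) * ∫ ω, f ω ∂ν :=
    h2.integral_fun_mul_eq_mul_integral ((hφ.comp hX).aestronglyMeasurable) hfm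
  have e1 : ∀ ω, T.indicator (1 : ℝ × ℝ → ℝ) (X ω) * f ω = (X ⁻¹' T).indicator f ω := by
    intro ω
    by_cases h : X ω ∈ T <;> simp [h, Set.indicator_of_mem, Set.indicator_of_notMem]
  have e2 : ∀ ω, T.indicator (1 : ℝ × ℝ → ℝ) (X ω) = (X ⁻¹' T).indicator 1 ω := by
    intro ω
    by_cases h : X ω ∈ T <;> simp [h]
  simp_rw [e1, e2] at h3
  rw [h3, integral_indicator_one (hX hT), measureReal_def]

lemma cexp_indicator [IsProbabilityMeasure μ] {G S : Set Ω}
    (hG : MeasurableSet G) (hS : MeasurableSet S) (hGpos : μ G ≠ 0) (hSpos : μ S ≠ 0)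
    {f : Ω → ℝ} (hf : Integrable f μ)
    (hfac : ∫ ω, S.indicator f ω ∂(μ[|G]) = ((μ[|G]) S).toReal * cexp μ G f) :
    cexp μ S (G.indicator f) = prCond μ G S * cexp μ G f := by
  have hGfin : μ G ≠ ⊤ := measure_ne_top μ G
  have hc : (0:ℝ) < (μ G).toReal := ENNReal.toReal_pos hGpos hGfin
  -- rewrite LHS
  have l1 : cexp μ S (G.indicator f) = (μ S).toReal⁻¹ * ∫ ω in G ∩ S, f ω ∂μ := by
    rw [cexp_eq_smul, ← Measure.restrict_restrict hG, integral_indicator hG]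
  -- rewrite hfac LHS
  have l2 : ∫ ω, S.indicator f ω ∂(μ[|G])
      = (μ G).toReal⁻¹ * ∫ ω in G ∩ S, f ω ∂μ := by
    rw [ProbabilityTheory.cond, integral_smul_measure, ENNReal.toReal_inv, smul_eq_mul,
      integral_indicator hS, Measure.restrict_restrict hS, Set.inter_comm S G]
  -- rewrite hfac RHS measure
  have l3 : ((μ[|G]) S).toReal = (μ G).toReal⁻¹ * (μ (G ∩ S)).toReal := by
    rw [cond_apply hG, ENNReal.toReal_mul, ENNReal.toReal_inv]
  rw [l2, l3] at hfac
  have key : ∫ ω in G ∩ S, f ω ∂μ = (μ (G ∩ S)).toReal * cexp μ G f := by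
    have hne : (μ G).toReal⁻¹ ≠ 0 := ne_of_gt (inv_pos.2 hc)
    apply mul_left_cancel₀ hne
    rw [hfac]; ring
  rw [l1, key, prCond, pr, pr]
  ring

lemma pr_inter_of_cond_indep [IsProbabilityMeasure μ] {A B C : Set Ω}
    (hC : MeasurableSet C) (hCpos : μ C ≠ 0)
    (hind : (μ[|C]) (A ∩ B) = (μ[|C]) A * (μ[|C]) B) :
    pr μ (A ∩ B ∩ C) = pr μ (A ∩ C) * prCond μ B C := by
  have hCfin : μ C ≠ ⊤ := measure_ne_top μ C
  have hc : (0:ℝ) < (μ C).toReal := ENNReal.toReal_pos hCpos hCfin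
  have h := congrArg ENNReal.toReal hind
  rw [cond_apply hC, cond_apply hC, cond_apply hC, ENNReal.toReal_mul, ENNReal.toReal_mul,
    ENNReal.toReal_mul, ENNReal.toReal_mul, ENNReal.toReal_inv] at h
  have e1 : A ∩ B ∩ C = C ∩ (A ∩ B) := by rw [Set.inter_comm]
  have e2 : A ∩ C = C ∩ A := Set.inter_comm _ _
  have e3 : B ∩ C = C ∩ B := Set.inter_comm _ _
  rw [prCond, pr, pr, pr, pr, e1, e2, e3]
  field_simp at h ⊢
  nlinarith [h, hc]

end Aux

/-- identification of `E[Y₀₀ | CP]`. -/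
theorem EY00_CP_identified
    {Ω : Type*} [MeasurableSpace Ω] (μ : Measure Ω) [IsProbabilityMeasure μ]
    (Y : Fin 2 → Fin 2 → Ω → ℝ) (D1 D0 Z W : Ω → ℝ)
    (hYint : ∀ d z, Integrable (Y d z) μ) (hYmeas : ∀ d z, Measurable (Y d z))
    (hD1v : ∀ ω, D1 ω = 0 ∨ D1 ω = 1) (hD0v : ∀ ω, D0 ω = 0 ∨ D0 ω = 1)
    (hZv : ∀ ω, Z ω = 0 ∨ Z ω = 1) (hWv : ∀ ω, W ω = 0 ∨ W ω = 1)
    (hD1m : Measurable D1) (hD0m : Measurable D0) (hZm : Measurable Z) (hWm : Measurable W)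
    (D : Ω → ℝ) (hD : ∀ ω, D ω = D1 ω * Z ω + D0 ω * (1 - Z ω))
    (Yo : Ω → ℝ)
    (hYo : ∀ ω, Yo ω = (Y 1 1 ω * Z ω + Y 1 0 ω * (1 - Z ω)) * D ω
      + (Y 0 1 ω * Z ω + Y 0 0 ω * (1 - Z ω)) * (1 - D ω))
    (hmono : ∀ᵐ ω ∂μ, D0 ω ≤ D1 ω)
    (hCI1 : ∀ (d z : Fin 2) (i j : ℝ),
      IndepFun (fun ω => (Z ω, W ω)) (Y d z) (μ[|{ω | D1 ω = i ∧ D0 ω = j}]))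
    (hCI2 : ∀ w' : ℝ, IndepFun Z (fun ω => (D1 ω, D0 ω)) (μ[|evEq W w']))
    (hpos : ∀ z : ℝ, z = 0 ∨ z = 1 → 0 < pr μ (evEq Z z ∩ evEq W 1))
    (hNT : 0 < pr μ (NTset D1 D0)) (hCP : 0 < pr μ (CPset D1 D0))
    (hCPW : 0 < prCond μ (CPset D1 D0) (evEq W 1))
    (ρ0 : ℝ) (hρ0 : cexp μ (NTset D1 D0) (fun ω => Y 0 1 ω - Y 0 0 ω) = ρ0)
    (r01 : ℝ)
    (hr01 : r01 = cexp μ (evEq Z 1 ∩ evEq W 1) (fun ω => Yo ω * (1 - D ω))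
      - cexp μ (evEq Z 0 ∩ evEq W 1) (fun ω => Yo ω * (1 - D ω))) :
    cexp μ (CPset D1 D0) (fun ω => Y 0 0 ω)
      = -((r01 - ρ0 * prCond μ (NTset D1 D0) (evEq W 1))
        / prCond μ (CPset D1 D0) (evEq W 1)) := by
  classical
  -- measurability of the basic events
  have hZ1m : MeasurableSet (evEq Z 1) := hZm (measurableSet_singleton 1)
  have hZ0m : MeasurableSet (evEq Z 0) := hZm (measurableSet_singleton 0)
  have hW1m : MeasurableSet (evEq W 1) := hWm (measurableSet_singleton 1)
  have hNTm : MeasurableSet (NTset D1 D0) :=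
    (hD1m (measurableSet_singleton 0)).inter (hD0m (measurableSet_singleton 0))
  have hCPm : MeasurableSet (CPset D1 D0) :=
    (hD1m (measurableSet_singleton 1)).inter (hD0m (measurableSet_singleton 0))
  have hS1m : MeasurableSet (evEq Z 1 ∩ evEq W 1) := hZ1m.inter hW1m
  have hS0m : MeasurableSet (evEq Z 0 ∩ evEq W 1) := hZ0m.inter hW1m
  -- positivity
  have prS1 := hpos 1 (Or.inr rfl)
  have prS0 := hpos 0 (Or.inl rfl)
  have hS1ne : μ (evEq Z 1 ∩ evEq W 1) ≠ 0 := by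
    intro h; rw [pr, h] at prS1; simp at prS1
  have hS0ne : μ (evEq Z 0 ∩ evEq W 1) ≠ 0 := by
    intro h; rw [pr, h] at prS0; simp at prS0
  have hW1ne : μ (evEq W 1) ≠ 0 := by
    intro h
    exact hS1ne (measure_mono_null Set.inter_subset_right h)
  have hNTne : μ (NTset D1 D0) ≠ 0 := by
    intro h; rw [pr, h] at hNT; simp at hNT
  have hCPne : μ (CPset D1 D0) ≠ 0 := by
    intro h; rw [pr, h] at hCP; simp at hCP
  haveI iNT : IsProbabilityMeasure (μ[|NTset D1 D0]) := cond_isProbabilityMeasure hNTne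
  haveI iCP : IsProbabilityMeasure (μ[|CPset D1 D0]) := cond_isProbabilityMeasure hCPne
  -- preimage descriptions
  have hXm : Measurable fun ω => (Z ω, W ω) := hZm.prodMk hWm
  have hS1pre : evEq Z 1 ∩ evEq W 1 = (fun ω => (Z ω, W ω)) ⁻¹' {((1:ℝ), (1:ℝ))} := by
    ext ω; simp [evEq, Prod.ext_iff]
  have hS0pre : evEq Z 0 ∩ evEq W 1 = (fun ω => (Z ω, W ω)) ⁻¹' {((0:ℝ), (1:ℝ))} := by
    ext ω; simp [evEq, Prod.ext_iff]
  have hNTpre : NTset D1 D0 = (fun ω => (D1 ω, D0 ω)) ⁻¹' {((0:ℝ), (0:ℝ))} := by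
    ext ω; simp [NTset, Prod.ext_iff]
  have hCPpre : CPset D1 D0 = (fun ω => (D1 ω, D0 ω)) ⁻¹' {((1:ℝ), (0:ℝ))} := by
    ext ω; simp [CPset, Prod.ext_iff]
  -- factorization via conditional independence (CI1)
  have fac1NT : ∫ ω, (evEq Z 1 ∩ evEq W 1).indicator (Y 0 1) ω ∂(μ[|NTset D1 D0])
      = ((μ[|NTset D1 D0]) (evEq Z 1 ∩ evEq W 1)).toReal * cexp μ (NTset D1 D0) (Y 0 1) := by
    have hci : IndepFun (fun ω => (Z ω, W ω)) (Y 0 1) (μ[|NTset D1 D0]) := hCI1 0 1 0 0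
    rw [cexp, hS1pre]
    exact integral_indicator_of_indepFun _ hXm (hYmeas 0 1).aestronglyMeasurable
      hci (measurableSet_singleton _)
  have fac0NT : ∫ ω, (evEq Z 0 ∩ evEq W 1).indicator (Y 0 0) ω ∂(μ[|NTset D1 D0])
      = ((μ[|NTset D1 D0]) (evEq Z 0 ∩ evEq W 1)).toReal * cexp μ (NTset D1 D0) (Y 0 0) := by
    have hci : IndepFun (fun ω => (Z ω, W ω)) (Y 0 0) (μ[|NTset D1 D0]) := hCI1 0 0 0 0
    rw [cexp, hS0pre]
    exact integral_indicator_of_indepFun _ hXm (hYmeas 0 0).aestronglyMeasurable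
      hci (measurableSet_singleton _)
  have fac0CP : ∫ ω, (evEq Z 0 ∩ evEq W 1).indicator (Y 0 0) ω ∂(μ[|CPset D1 D0])
      = ((μ[|CPset D1 D0]) (evEq Z 0 ∩ evEq W 1)).toReal * cexp μ (CPset D1 D0) (Y 0 0) := by
    have hci : IndepFun (fun ω => (Z ω, W ω)) (Y 0 0) (μ[|CPset D1 D0]) := hCI1 0 0 1 0
    rw [cexp, hS0pre]
    exact integral_indicator_of_indepFun _ hXm (hYmeas 0 0).aestronglyMeasurable
      hci (measurableSet_singleton _)
  -- conditional-probability factorization via CI2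
  have key2 : ∀ (z : ℝ) (G : Set Ω) (i j : ℝ),
      G = (fun ω => (D1 ω, D0 ω)) ⁻¹' {(i, j)} →
      pr μ (evEq Z z ∩ G ∩ evEq W 1) = pr μ (evEq Z z ∩ evEq W 1) * prCond μ G (evEq W 1) := by
    intro z G i j hG
    apply pr_inter_of_cond_indep hW1m hW1ne
    have h := (hCI2 1).measure_inter_preimage_eq_mul {z} {(i, j)}
      (measurableSet_singleton _) (measurableSet_singleton _)
    rw [← hG] at h
    exact h
  have prcNT1 : prCond μ (NTset D1 D0) (evEq Z 1 ∩ evEq W 1)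
      = prCond μ (NTset D1 D0) (evEq W 1) := by
    have hset : NTset D1 D0 ∩ (evEq Z 1 ∩ evEq W 1)
        = evEq Z 1 ∩ NTset D1 D0 ∩ evEq W 1 := by
      ext ω; simp only [Set.mem_inter_iff]; tauto
    rw [prCond, hset, key2 1 _ 0 0 hNTpre, mul_comm, mul_div_assoc,
      div_self (ne_of_gt prS1), mul_one]
  have prcNT0 : prCond μ (NTset D1 D0) (evEq Z 0 ∩ evEq W 1)
      = prCond μ (NTset D1 D0) (evEq W 1) := by
    have hset : NTset D1 D0 ∩ (evEq Z 0 ∩ evEq W 1)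
        = evEq Z 0 ∩ NTset D1 D0 ∩ evEq W 1 := by
      ext ω; simp only [Set.mem_inter_iff]; tauto
    rw [prCond, hset, key2 0 _ 0 0 hNTpre, mul_comm, mul_div_assoc,
      div_self (ne_of_gt prS0), mul_one]
  have prcCP0 : prCond μ (CPset D1 D0) (evEq Z 0 ∩ evEq W 1)
      = prCond μ (CPset D1 D0) (evEq W 1) := by
    have hset : CPset D1 D0 ∩ (evEq Z 0 ∩ evEq W 1)
        = evEq Z 0 ∩ CPset D1 D0 ∩ evEq W 1 := by
      ext ω; simp only [Set.mem_inter_iff]; tauto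
    rw [prCond, hset, key2 0 _ 1 0 hCPpre, mul_comm, mul_div_assoc,
      div_self (ne_of_gt prS0), mul_one]
  -- pointwise identities
  have E1 : cexp μ (evEq Z 1 ∩ evEq W 1) (fun ω => Yo ω * (1 - D ω))
      = cexp μ (evEq Z 1 ∩ evEq W 1) ((NTset D1 D0).indicator (Y 0 1)) := by
    apply cexp_congr_ae μ hS1m
    filter_upwards [hmono] with ω hm hωS
    have hz : Z ω = 1 := hωS.1
    have hDω : D ω = D1 ω := by rw [hD, hz]; ring
    rcases hD1v ω with h1 | h1
    · have h0 : D0 ω = 0 := by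
        rcases hD0v ω with h0 | h0
        · exact h0
        · exfalso; rw [h1, h0] at hm; linarith
      have hmem : ω ∈ NTset D1 D0 := ⟨h1, h0⟩
      rw [Set.indicator_of_mem hmem, hYo, hDω, h1, hz]; ring
    · have hnmem : ω ∉ NTset D1 D0 := fun hh => by rw [hh.1] at h1; norm_num at h1
      rw [Set.indicator_of_notMem hnmem, hYo, hDω, h1]; ring
  have E0 : cexp μ (evEq Z 0 ∩ evEq W 1) (fun ω => Yo ω * (1 - D ω))
      = cexp μ (evEq Z 0 ∩ evEq W 1)
          (fun ω => (NTset D1 D0).indicator (Y 0 0) ω + (CPset D1 D0).indicator (Y 0 0) ω) := by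
    apply cexp_congr_ae μ hS0m
    filter_upwards with ω hωS
    have hz : Z ω = 0 := hωS.1
    have hDω : D ω = D0 ω := by rw [hD, hz]; ring
    rcases hD0v ω with h0 | h0
    · rcases hD1v ω with h1 | h1
      · have hmem : ω ∈ NTset D1 D0 := ⟨h1, h0⟩
        have hnm : ω ∉ CPset D1 D0 := fun hh => by rw [hh.1] at h1; norm_num at h1
        rw [Set.indicator_of_mem hmem, Set.indicator_of_notMem hnm, hYo, hDω, h0, hz]; ring
      · have hmem : ω ∈ CPset D1 D0 := ⟨h1, h0⟩
        have hnm : ω ∉ NTset D1 D0 := fun hh => by rw [hh.1] at h1; norm_num at h1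
        rw [Set.indicator_of_notMem hnm, Set.indicator_of_mem hmem, hYo, hDω, h0, hz]; ring
    · have hnm1 : ω ∉ NTset D1 D0 := fun hh => by rw [hh.2] at h0; norm_num at h0
      have hnm2 : ω ∉ CPset D1 D0 := fun hh => by rw [hh.2] at h0; norm_num at h0
      rw [Set.indicator_of_notMem hnm1, Set.indicator_of_notMem hnm2, hYo, hDω, h0]; ring
  -- identify the two conditional expectations
  have ES1 : cexp μ (evEq Z 1 ∩ evEq W 1) (fun ω => Yo ω * (1 - D ω))
      = prCond μ (NTset D1 D0) (evEq W 1) * cexp μ (NTset D1 D0) (Y 0 1) := by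
    rw [E1, cexp_indicator hNTm hS1m hNTne hS1ne (hYint 0 1) fac1NT, prcNT1]
  have Esum : cexp μ (evEq Z 0 ∩ evEq W 1)
        (fun ω => (NTset D1 D0).indicator (Y 0 0) ω + (CPset D1 D0).indicator (Y 0 0) ω)
      = cexp μ (evEq Z 0 ∩ evEq W 1) ((NTset D1 D0).indicator (Y 0 0))
        + cexp μ (evEq Z 0 ∩ evEq W 1) ((CPset D1 D0).indicator (Y 0 0)) := by
    rw [cexp, cexp, cexp]
    exact integral_add (integrable_cond hS0ne ((hYint 0 0).indicator hNTm))
      (integrable_cond hS0ne ((hYint 0 0).indicator hCPm))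
  have ES0 : cexp μ (evEq Z 0 ∩ evEq W 1) (fun ω => Yo ω * (1 - D ω))
      = prCond μ (NTset D1 D0) (evEq W 1) * cexp μ (NTset D1 D0) (Y 0 0)
        + prCond μ (CPset D1 D0) (evEq W 1) * cexp μ (CPset D1 D0) (Y 0 0) := by
    rw [E0, Esum, cexp_indicator hNTm hS0m hNTne hS0ne (hYint 0 0) fac0NT,
      cexp_indicator hCPm hS0m hCPne hS0ne (hYint 0 0) fac0CP, prcNT0, prcCP0]
  -- split ρ0
  have hsub : cexp μ (NTset D1 D0) (fun ω => Y 0 1 ω - Y 0 0 ω)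
      = cexp μ (NTset D1 D0) (Y 0 1) - cexp μ (NTset D1 D0) (Y 0 0) := by
    rw [cexp, cexp, cexp]
    exact integral_sub (integrable_cond hNTne (hYint 0 1)) (integrable_cond hNTne (hYint 0 0))
  -- final algebra
  set a1 := cexp μ (NTset D1 D0) (Y 0 1)
  set a0 := cexp μ (NTset D1 D0) (Y 0 0)
  set c := cexp μ (CPset D1 D0) (Y 0 0)
  set pNT := prCond μ (NTset D1 D0) (evEq W 1)
  set pCP := prCond μ (CPset D1 D0) (evEq W 1)
  have hρ : a1 - a0 = ρ0 := by rw [← hρ0, hsub]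
  have hr : r01 = pNT * a1 - (pNT * a0 + pCP * c) := by rw [hr01, ES1, ES0]
  rw [hr, ← hρ]
  have hpCP : pCP ≠ 0 := ne_of_gt hCPW
  field_simp
  ring
end
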